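/- Let 0 ≤ α < n, Q be a cube in ℝⁿ, and f be locally integrable. Then for all x ∈ Q one has M_α(f χ_Q)(x) = M_{α,Q}(f)(x), i.e., the fractional maximal function of f χ_Q agrees on Q with the local fractional maximal function relative to Q. -/
import Mathlib

open MeasureTheory Set

noncomputable section

/-- An axis-parallel cube in `ℝⁿ` with positive side length. -/
def IsCube {n : ℕ} (Q : Set (Fin n → ℝ)) : Prop :=
  ∃ (a : Fin n → ℝ) (l : ℝ), 0 < l ∧ Q = Set.Icc a (fun i => a i + l)

/-- The average `f_Q` of a function over a set. -/
def avgOn {n : ℕ} (Q : Set (Fin n → ℝ)) (b : (Fin n → ℝ) → ℝ) : ℝ :=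
  (volume Q).toReal⁻¹ * ∫ y in Q, b y

/-- The fractional maximal operator `M_α` (sup over axis-parallel cubes containing `x`). -/
def fracMax {n : ℕ} (α : ℝ) (f : (Fin n → ℝ) → ℝ) (x : Fin n → ℝ) : ℝ :=
  ⨆ Q : {Q : Set (Fin n → ℝ) // IsCube Q ∧ x ∈ Q},
    (volume Q.1).toReal ^ (α / n - 1) * ∫ y in Q.1, |f y|

/-- The local fractional maximal operator `M_{α,Q}` relative to a cube `Q`. -/
def fracMaxLoc {n : ℕ} (α : ℝ) (Q : Set (Fin n → ℝ)) (f : (Fin n → ℝ) → ℝ)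
    (x : Fin n → ℝ) : ℝ :=
  ⨆ Q₀ : {Q₀ : Set (Fin n → ℝ) // IsCube Q₀ ∧ x ∈ Q₀ ∧ Q₀ ⊆ Q},
    (volume Q₀.1).toReal ^ (α / n - 1) * ∫ y in Q₀.1, |f y|

/-- The Fefferman–Stein sharp maximal operator `M^♯`. -/
def sharpMax {n : ℕ} (f : (Fin n → ℝ) → ℝ) (x : Fin n → ℝ) : ℝ :=
  ⨆ Q : {Q : Set (Fin n → ℝ) // IsCube Q ∧ x ∈ Q},
    (volume Q.1).toReal⁻¹ * ∫ y in Q.1, |f y - avgOn Q.1 f|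

/-- The maximal commutator `M_{α,b}`. -/
def maxComm {n : ℕ} (α : ℝ) (b f : (Fin n → ℝ) → ℝ) (x : Fin n → ℝ) : ℝ :=
  ⨆ Q : {Q : Set (Fin n → ℝ) // IsCube Q ∧ x ∈ Q},
    (volume Q.1).toReal ^ (α / n - 1) * ∫ y in Q.1, |b x - b y| * |f y|

/-- The axis-parallel cube centered at `x` with side length `t`. -/
def centeredCube {n : ℕ} (x : Fin n → ℝ) (t : ℝ) : Set (Fin n → ℝ) :=
  Set.Icc (fun i => x i - t / 2) (fun i => x i + t / 2)

/-- The norm of the slice space `(E_r^p)_t(ℝⁿ)`. -/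
def sliceNorm {n : ℕ} (r p t : ℝ) (f : (Fin n → ℝ) → ℝ) : ℝ :=
  (∫ x, ((volume (centeredCube x t)).toReal⁻¹ *
      ∫ y in centeredCube x t, |f y| ^ r) ^ (p / r)) ^ (1 / p)

/-- Scalar interval lemma used for the cube construction. -/
lemma interval_key (a l a' l' y : ℝ) (hl : 0 < l) (hl' : 0 < l')
    (h1 : a ≤ y) (h2 : y ≤ a + l) (h3 : a' ≤ y) (h4 : y ≤ a' + l') :
    min (max a a') (a + l - min l l') ≤ y ∧
      y ≤ min (max a a') (a + l - min l l') + min l l' := by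
  constructor
  · exact le_trans (min_le_left _ _) (max_le h1 h3)
  · have hy : y ≤ max a a' + min l l' := by
      rcases le_total l l' with h | h
      · rw [min_eq_left h]; linarith [le_max_left a a']
      · rw [min_eq_right h]; linarith [le_max_right a a']
    have : min (max a a') (a + l - min l l') + min l l'
        = min (max a a' + min l l') (a + l - min l l' + min l l') :=
      (min_add_add_right _ _ _).symm
    rw [this]
    exact le_min hy (by linarith)

theorem stmt2 {n : ℕ} (α : ℝ) (hα : 0 ≤ α) (hαn : α < n)
    (Q : Set (Fin n → ℝ)) (hQ : IsCube Q)
    (f : (Fin n → ℝ) → ℝ) (hf : LocallyIntegrable f volume)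
    (x : Fin n → ℝ) (hx : x ∈ Q) :
    fracMax α (Q.indicator f) x = fracMaxLoc α Q f x := by
  obtain ⟨a, l, hl, rfl⟩ := hQ
  have hn : 0 < (n : ℝ) := lt_of_le_of_lt hα hαn
  have hexp : α / n - 1 < 0 := by
    rw [sub_neg, div_lt_one hn]; exact hαn
  set Q : Set (Fin n → ℝ) := Set.Icc a (fun i => a i + l) with hQdef
  have hQmeas : MeasurableSet Q := measurableSet_Icc
  -- key: for Q₀ ⊆ Q, the integrands agree
  have hcongr : ∀ Q₀ : Set (Fin n → ℝ), MeasurableSet Q₀ → Q₀ ⊆ Q →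
      (∫ y in Q₀, |Q.indicator f y|) = ∫ y in Q₀, |f y| := by
    intro Q₀ hm hsub
    refine setIntegral_congr_fun hm fun y hy => ?_
    rw [Set.indicator_of_mem (hsub hy)]
  rw [fracMax, fracMaxLoc, iSup, iSup]
  apply csSup_eq_csSup_of_forall_exists_le
  · rintro v ⟨⟨Q', ⟨a', l', hl', rfl⟩, hx'⟩, rfl⟩
    set Q' : Set (Fin n → ℝ) := Set.Icc a' (fun i => a' i + l') with hQ'def
    set s : ℝ := min l l' with hs
    have hspos : 0 < s := lt_min hl hl'
    set c : Fin n → ℝ := fun i => min (max (a i) (a' i)) (a i + l - s) with hc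
    set Q₀ : Set (Fin n → ℝ) := Set.Icc c (fun i => c i + s) with hQ₀
    have hxQ : ∀ i, a i ≤ x i ∧ x i ≤ a i + l := fun i => ⟨hx.1 i, hx.2 i⟩
    have hxQ' : ∀ i, a' i ≤ x i ∧ x i ≤ a' i + l' := fun i => ⟨hx'.1 i, hx'.2 i⟩
    have hkey : ∀ (y : Fin n → ℝ), y ∈ Q → y ∈ Q' → y ∈ Q₀ := by
      intro y hyQ hyQ'
      constructor <;> intro i
      · exact (interval_key (a i) l (a' i) l' (y i) hl hl'
          (hyQ.1 i) (hyQ.2 i) (hyQ'.1 i) (hyQ'.2 i)).1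
      · exact (interval_key (a i) l (a' i) l' (y i) hl hl'
          (hyQ.1 i) (hyQ.2 i) (hyQ'.1 i) (hyQ'.2 i)).2
    have hxQ₀ : x ∈ Q₀ := hkey x hx hx'
    have hsubQ : Q₀ ⊆ Q := by
      intro y hy
      constructor <;> intro i
      · have h := hy.1 i
        have h1 : a i ≤ c i := le_min (le_max_left _ _) (by
          have := min_le_left l l'; simp only [hs]; linarith)
        dsimp only at h ⊢
        linarith
      · have h := hy.2 i
        have h2 : c i + s ≤ a i + l := by
          have := min_le_right (max (a i) (a' i)) (a i + l - s)
          simp only [hc] at *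
          linarith
        dsimp only at h ⊢
        linarith
    refine ⟨_, ⟨⟨Q₀, ⟨c, s, hspos, rfl⟩, hxQ₀, hsubQ⟩, rfl⟩, ?_⟩
    -- volumes
    have hvQ' : (volume Q').toReal = l' ^ n := by
      rw [hQ'def, Real.volume_Icc_pi_toReal (fun i => by dsimp; linarith)]
      simp
    have hvQ₀ : (volume Q₀).toReal = s ^ n := by
      rw [hQ₀, Real.volume_Icc_pi_toReal (fun i => by dsimp; linarith)]
      simp
    have hQ₀meas : MeasurableSet Q₀ := measurableSet_Icc
    -- integral comparison
    have habs : (∫ y in Q', |Q.indicator f y|) = ∫ y in Q' ∩ Q, |f y| := by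
      have : ∀ y, |Q.indicator f y| = Q.indicator (fun z => |f z|) y := by
        intro y
        by_cases hy : y ∈ Q
        · simp [Set.indicator_of_mem hy]
        · simp [Set.indicator_of_notMem hy]
      simp_rw [this]
      exact setIntegral_indicator hQmeas
    have hint : IntegrableOn (fun y => |f y|) Q₀ volume :=
      (hf.integrableOn_isCompact isCompact_Icc).abs
    have hIle : (∫ y in Q' ∩ Q, |f y|) ≤ ∫ y in Q₀, |f y| := by
      refine setIntegral_mono_set hint ?_ ?_
      · filter_upwards with y using abs_nonneg _
      · filter_upwards with y hy using hkey y hy.2 hy.1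
    have hIpos : 0 ≤ ∫ y in Q' ∩ Q, |f y| :=
      setIntegral_nonneg ((measurableSet_Icc).inter hQmeas) fun y _ => abs_nonneg _
    have hvle : (volume Q').toReal ^ (α / n - 1) ≤ (volume Q₀).toReal ^ (α / n - 1) := by
      rw [hvQ', hvQ₀]
      exact Real.rpow_le_rpow_of_nonpos (pow_pos hspos n)
        (pow_le_pow_left₀ hspos.le (min_le_right l l') n) hexp.le
    calc (volume Q').toReal ^ (α / n - 1) * ∫ y in Q', |Q.indicator f y|
        = (volume Q').toReal ^ (α / n - 1) * ∫ y in Q' ∩ Q, |f y| := by rw [habs]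
      _ ≤ (volume Q₀).toReal ^ (α / n - 1) * ∫ y in Q₀, |f y| := by
          apply mul_le_mul hvle hIle hIpos
          positivity
  · rintro v ⟨⟨Q₀, hQ₀cube, hxQ₀, hsub⟩, rfl⟩
    obtain ⟨c, s, hspos, rfl⟩ := hQ₀cube
    refine ⟨_, ⟨⟨_, ⟨c, s, hspos, rfl⟩, hxQ₀⟩, rfl⟩, ?_⟩
    dsimp only
    rw [hcongr _ measurableSet_Icc hsub]
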